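/- Let V ⊆ ℝⁿ be a compact convex body symmetric about 0 (so -V = V) that is not a Euclidean ball centered at 0, let H ≤ O(n) be the stabilizer of V under the orthogonal group action, and let L ⊆ ∂V be a finite subset with 0 ∈ interior(conv L). Then W := conv(H · L) is a compact convex body, symmetric about 0, with nonempty interior, which is NOT strictly convex (some boundary point of W fails to be an extreme point). -/

import Mathlib

open Metric Set
open scoped RealInnerProductSpace Topology

section AuxLemmas


theorem aux_isCompact_convexHull {E : Type*} [NormedAddCommGroup E] [NormedSpace ℝ E]
    [FiniteDimensional ℝ E] {s : Set E} (hs : IsCompact s) :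
    IsCompact (convexHull ℝ s) := by
  classical
  rcases s.eq_empty_or_nonempty with rfl | ⟨a₀, ha₀⟩
  · simp
  set m := Module.finrank ℝ E + 1 with hm
  set K : Set ((Fin m → ℝ) × (Fin m → E)) :=
    (stdSimplex ℝ (Fin m)) ×ˢ (Set.univ.pi fun _ => s) with hK
  have hKc : IsCompact K := (isCompact_stdSimplex ℝ (Fin m)).prod (isCompact_univ_pi fun _ => hs)
  have hf : Continuous fun p : (Fin m → ℝ) × (Fin m → E) => ∑ i, p.1 i • p.2 i := by
    refine continuous_finset_sum _ fun i _ => ?_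
    exact ((continuous_apply i).comp continuous_fst).smul
      ((continuous_apply i).comp continuous_snd)
  have himg : convexHull ℝ s = (fun p : (Fin m → ℝ) × (Fin m → E) => ∑ i, p.1 i • p.2 i) '' K := by
    apply Subset.antisymm
    · intro x hx
      obtain ⟨ι, hι, z, w, hzs, hai, hw0, hw1, hwz⟩ := eq_pos_convex_span_of_mem_convexHull hx
      letI := hι
      have hcard : Fintype.card ι ≤ Fintype.card (Fin m) := by
        rw [Fintype.card_fin]
        calc Fintype.card ι ≤ Module.finrank ℝ (vectorSpan ℝ (Set.range z)) + 1 :=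
              hai.card_le_finrank_succ
          _ ≤ m := Nat.add_le_add_right (Submodule.finrank_le _) 1
      obtain ⟨e⟩ := Function.Embedding.nonempty_of_card_le hcard
      set w' : Fin m → ℝ := fun j => if h : ∃ i, e i = j then w h.choose else 0 with hw'
      set z' : Fin m → E := fun j => if h : ∃ i, e i = j then z h.choose else a₀ with hz'
      have key : ∀ i : ι, w' (e i) = w i ∧ z' (e i) = z i := by
        intro i
        have h : ∃ i', e i' = e i := ⟨i, rfl⟩
        have hch : h.choose = i := e.injective h.choose_spec
        constructor
        · simp only [hw', dif_pos h, hch]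
        · simp only [hz', dif_pos h, hch]
      have hmap : ∀ j, j ∉ Finset.univ.map e → w' j = 0 := by
        intro j hj
        have : ¬ ∃ i, e i = j := by simpa [Finset.mem_map] using hj
        simp only [hw', dif_neg this]
      have h1 : ∑ j, w' j • z' j = x := by
        rw [← Finset.sum_subset (Finset.subset_univ (Finset.univ.map e))
          (fun j _ hj => by rw [hmap j hj, zero_smul]), Finset.sum_map]
        exact (Finset.sum_congr rfl fun i _ => by rw [(key i).1, (key i).2]).trans hwz
      have h2 : ∑ j, w' j = 1 := by
        rw [← Finset.sum_subset (Finset.subset_univ (Finset.univ.map e))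
          (fun j _ hj => hmap j hj), Finset.sum_map]
        exact (Finset.sum_congr rfl fun i _ => (key i).1).trans hw1
      refine ⟨(w', z'), ⟨⟨fun j => ?_, h2⟩, fun j _ => ?_⟩, h1⟩
      · by_cases h : ∃ i, e i = j
        · simp only [hw', dif_pos h]; exact (hw0 _).le
        · simp only [hw', dif_neg h]; exact le_refl _
      · by_cases h : ∃ i, e i = j
        · simp only [hz', dif_pos h]; exact hzs ⟨_, rfl⟩
        · simp only [hz', dif_neg h]; exact ha₀
    · rintro x ⟨⟨w, z⟩, ⟨hwmem, hzmem⟩, rfl⟩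
      have hw1 : ∑ i, w i = 1 := hwmem.2
      have := Finset.centerMass_mem_convexHull (Finset.univ) (fun i _ => hwmem.1 i)
        (by rw [hw1]; norm_num) (fun i _ => hzmem i (Set.mem_univ i))
      rwa [Finset.centerMass_eq_of_sum_1 _ _ hw1] at this
  rw [himg]
  exact hKc.image hf

theorem aux_preconnected_finite_subsingleton {A : Set ℝ} (hA : IsPreconnected A)
    (hfin : A.Finite) : A.Subsingleton := by
  intro a ha b hb
  by_contra hne
  have hoc := hA.ordConnected
  rcases lt_or_gt_of_ne hne with h | h
  · exact Set.Icc_infinite h (hfin.subset (hoc.out ha hb))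
  · exact Set.Icc_infinite h (hfin.subset (hoc.out hb ha))


-- small-dimension: symmetric compact convex body in dim ≤ 1 is a ball
theorem aux_small_dim (n : ℕ) (hn : n < 2) (V : Set (EuclideanSpace ℝ (Fin n)))
    (hVc : IsCompact V) (hVconv : Convex ℝ V)
    (hVint : (0 : EuclideanSpace ℝ (Fin n)) ∈ interior V)
    (hVsymm : -V = V) :
    ∃ r : ℝ, V = Metric.closedBall (0 : EuclideanSpace ℝ (Fin n)) r := by
  have h0V : (0 : EuclideanSpace ℝ (Fin n)) ∈ V := interior_subset hVint
  obtain ⟨v, hvV, hvmax⟩ := hVc.exists_isMaxOn ⟨0, h0V⟩ continuous_norm.continuousOn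
  refine ⟨‖v‖, Subset.antisymm (fun x hx => mem_closedBall_zero_iff.2 (hvmax hx)) ?_⟩
  intro x hx
  rw [mem_closedBall_zero_iff] at hx
  by_cases hv0 : v = 0
  · have hx0 : x = 0 := norm_le_zero_iff.1 (by simpa [hv0] using hx)
    rw [hx0]; exact h0V
  · have hnt : Nontrivial (EuclideanSpace ℝ (Fin n)) := nontrivial_of_ne v 0 hv0
    have hn1 : (1 : ℕ) = n := by
      have h1 : 0 < Module.finrank ℝ (EuclideanSpace ℝ (Fin n)) := Module.finrank_pos
      rw [finrank_euclideanSpace_fin] at h1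
      omega
    have hsp : Submodule.span ℝ {v} = ⊤ := by
      apply Submodule.eq_top_of_finrank_eq
      rw [finrank_span_singleton hv0, finrank_euclideanSpace_fin]
      exact hn1
    have hxsp : x ∈ Submodule.span ℝ {v} := by rw [hsp]; trivial
    obtain ⟨c, rfl⟩ := Submodule.mem_span_singleton.1 hxsp
    have hvpos : 0 < ‖v‖ := norm_pos_iff.2 hv0
    have hc : |c| ≤ 1 := by
      rw [norm_smul, Real.norm_eq_abs] at hx
      nlinarith
    obtain ⟨hc1, hc2⟩ := abs_le.1 hc
    have hnegv : -v ∈ V := by rw [← hVsymm]; exact Set.neg_mem_neg.2 hvV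
    have := hVconv hnegv hvV (a := (1 - c)/2) (b := (1 + c)/2)
      (by linarith) (by linarith) (by ring)
    convert this using 1
    module

theorem aux_endgame (n : ℕ) (hn : 2 ≤ n)
    (V : Set (EuclideanSpace ℝ (Fin n)))
    (hVconv : Convex ℝ V)
    (hVint : (0 : EuclideanSpace ℝ (Fin n)) ∈ interior V)
    (S : Set (EuclideanSpace ℝ (Fin n)))
    (hSfr : S ⊆ frontier V)
    (N : Set ℝ) (hNfin : N.Finite) (hSnorm : ∀ y ∈ S, ‖y‖ ∈ N)
    (W : Set (EuclideanSpace ℝ (Fin n)))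
    (hWcomp : IsCompact W) (hWconv : Convex ℝ W)
    (hWint : (0 : EuclideanSpace ℝ (Fin n)) ∈ interior W)
    (hWV : W ⊆ V)
    (hfrS : frontier W ⊆ S)
    (hsub : ∀ A : Set ℝ, IsPreconnected A → A.Finite → A.Subsingleton) :
    ∃ r : ℝ, V = Metric.closedBall (0 : EuclideanSpace ℝ (Fin n)) r := by
  classical
  have hWnhds : W ∈ 𝓝 0 := mem_interior_iff_mem_nhds.1 hWint
  have habs : Absorbent ℝ W := absorbent_nhds_zero hWnhds
  obtain ⟨R, hR⟩ := hWcomp.isBounded.subset_closedBall 0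
  set R' := max R 1 with hR'
  have hRpos : (0:ℝ) < R' := lt_of_lt_of_le one_pos (le_max_right _ _)
  have hWR : W ⊆ closedBall 0 R' := hR.trans (closedBall_subset_closedBall (le_max_left _ _))
  have hgpos : ∀ x : EuclideanSpace ℝ (Fin n), x ≠ 0 → 0 < gauge W x := by
    intro x hx0
    have h1 := le_gauge_of_subset_closedBall habs hRpos.le hWR (x := x)
    have hxn : 0 < ‖x‖ := norm_pos_iff.2 hx0
    calc (0:ℝ) < ‖x‖ / R' := div_pos hxn hRpos
      _ ≤ gauge W x := h1
  have h0nfr : (0 : EuclideanSpace ℝ (Fin n)) ∉ frontier W := fun h => h.2 hWint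
  -- the boundary point in a given direction
  set P : EuclideanSpace ℝ (Fin n) → EuclideanSpace ℝ (Fin n) :=
    fun u => (gauge W u)⁻¹ • u with hP
  have hPfr : ∀ u : EuclideanSpace ℝ (Fin n), u ≠ 0 → P u ∈ frontier W := by
    intro u hu0
    have hg := hgpos u hu0
    rw [← gauge_eq_one_iff_mem_frontier hWconv hWnhds, hP]
    rw [gauge_smul_of_nonneg (inv_nonneg.2 hg.le), smul_eq_mul, inv_mul_cancel₀ hg.ne']
  -- the norm of the boundary point, as a function on the sphere
  set F : EuclideanSpace ℝ (Fin n) → ℝ := fun u => ‖P u‖ with hF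
  have hsphne : ∀ u : EuclideanSpace ℝ (Fin n), u ∈ sphere (0:EuclideanSpace ℝ (Fin n)) 1 →
      u ≠ 0 := by
    intro u hu h0
    rw [mem_sphere_zero_iff_norm, h0] at hu
    simp at hu
  have hFcont : ContinuousOn F (sphere (0:EuclideanSpace ℝ (Fin n)) 1) := by
    apply ContinuousOn.norm
    apply ContinuousOn.fun_smul
    · exact ContinuousOn.inv₀ (continuous_gauge hWconv hWnhds).continuousOn
        (fun u hu => (hgpos u (hsphne u hu)).ne')
    · exact continuousOn_id
  have hrank : 1 < Module.rank ℝ (EuclideanSpace ℝ (Fin n)) := by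
    rw [← Module.finrank_eq_rank, finrank_euclideanSpace_fin]
    exact_mod_cast hn
  have hconn : IsConnected (sphere (0:EuclideanSpace ℝ (Fin n)) 1) :=
    isConnected_sphere hrank 0 zero_le_one
  have himgN : F '' sphere (0:EuclideanSpace ℝ (Fin n)) 1 ⊆ N := by
    rintro _ ⟨u, hu, rfl⟩
    exact hSnorm _ (hfrS (hPfr u (hsphne u hu)))
  have himg_sub : (F '' sphere (0:EuclideanSpace ℝ (Fin n)) 1).Subsingleton :=
    hsub _ (hconn.isPreconnected.image F hFcont) (hNfin.subset himgN)
  haveI : Nontrivial (EuclideanSpace ℝ (Fin n)) := by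
    apply Module.nontrivial_of_finrank_pos (R := ℝ)
    rw [finrank_euclideanSpace_fin]; omega
  obtain ⟨u₀, hu₀⟩ := NormedSpace.sphere_nonempty
    (x := (0:EuclideanSpace ℝ (Fin n))) (r := 1) |>.2 zero_le_one
  set r := F u₀ with hr
  have hFconst : ∀ u ∈ sphere (0:EuclideanSpace ℝ (Fin n)) 1, F u = r :=
    fun u hu => himg_sub ⟨u, hu, rfl⟩ ⟨u₀, hu₀, rfl⟩
  have hrpos : 0 < r := by
    have h1 := hPfr u₀ (hsphne u₀ hu₀)
    have h2 : P u₀ ≠ 0 := fun h => h0nfr (h ▸ h1)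
    exact norm_pos_iff.2 h2
  -- frontier W is the sphere of radius r
  have hfr_eq : frontier W = sphere (0:EuclideanSpace ℝ (Fin n)) r := by
    apply Subset.antisymm
    · intro x hx
      have hx1 : gauge W x = 1 := (gauge_eq_one_iff_mem_frontier hWconv hWnhds).2 hx
      have hx0 : x ≠ 0 := fun h => h0nfr (h ▸ hx)
      have hxn : 0 < ‖x‖ := norm_pos_iff.2 hx0
      set u := ‖x‖⁻¹ • x with hu'
      have hu : ‖u‖ = 1 := by
        rw [hu', norm_smul, Real.norm_eq_abs, abs_of_pos (inv_pos.2 hxn),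
          inv_mul_cancel₀ hxn.ne']
      have hgu : gauge W u = ‖x‖⁻¹ := by
        rw [hu', gauge_smul_of_nonneg (inv_nonneg.2 hxn.le), smul_eq_mul, hx1, mul_one]
      have hPu : P u = x := by
        rw [hP]
        simp only
        rw [hgu, inv_inv, hu', smul_smul, mul_inv_cancel₀ hxn.ne', one_smul]
      have hfu := hFconst u (mem_sphere_zero_iff_norm.2 hu)
      rw [hF] at hfu
      simp only at hfu
      rw [hPu] at hfu
      exact mem_sphere_zero_iff_norm.2 hfu
    · intro y hy
      have hyn : ‖y‖ = r := mem_sphere_zero_iff_norm.1 hy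
      have hy0 : y ≠ 0 := by
        intro h; rw [h, norm_zero] at hyn; exact hrpos.ne hyn
      set u := r⁻¹ • y with hu'
      have hu : ‖u‖ = 1 := by
        rw [hu', norm_smul, Real.norm_eq_abs, abs_of_pos (inv_pos.2 hrpos), hyn,
          inv_mul_cancel₀ hrpos.ne']
      have hu0 : u ≠ 0 := hsphne u (mem_sphere_zero_iff_norm.2 hu)
      have hg := hgpos u hu0
      have hP1 : P u ∈ frontier W := hPfr u hu0
      have hnorm : ‖P u‖ = r := hFconst u (mem_sphere_zero_iff_norm.2 hu)
      have hPc : P u = ((gauge W u)⁻¹ * r⁻¹) • y := by rw [hP]; simp only [hu', smul_smul]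
      set c := (gauge W u)⁻¹ * r⁻¹ with hc
      have hcpos : 0 < c := mul_pos (inv_pos.2 hg) (inv_pos.2 hrpos)
      have hcr : c * r = r := by
        rw [hPc, norm_smul, Real.norm_eq_abs, abs_of_pos hcpos, hyn] at hnorm
        exact hnorm
      have hc1 : c = 1 :=
        mul_right_cancel₀ hrpos.ne' (hcr.trans (one_mul r).symm)
      have hPy : P u = y := by rw [hPc, hc1, one_smul]
      rwa [hPy] at hP1
  -- W is the closed ball of radius r
  have hWball : W = closedBall (0:EuclideanSpace ℝ (Fin n)) r := by
    apply Subset.antisymm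
    · intro x hxW
      rw [mem_closedBall_zero_iff]
      by_cases hx0 : x = 0
      · rw [hx0, norm_zero]; exact hrpos.le
      have hg1 : gauge W x ≤ 1 := gauge_le_one_of_mem hxW
      have hgp := hgpos x hx0
      have hq : P x ∈ frontier W := hPfr x hx0
      have hqn : ‖P x‖ = r := by
        rw [hfr_eq] at hq
        exact mem_sphere_zero_iff_norm.1 hq
      rw [hP] at hqn
      simp only at hqn
      rw [norm_smul, Real.norm_eq_abs, abs_of_pos (inv_pos.2 hgp)] at hqn
      have hxr : ‖x‖ = gauge W x * r := by
        field_simp at hqn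
        linarith
      rw [hxr]
      calc gauge W x * r ≤ 1 * r := by nlinarith
        _ = r := one_mul r
    · intro x hx
      rw [mem_closedBall_zero_iff] at hx
      by_cases hx0 : x = 0
      · rw [hx0]; exact interior_subset hWint
      have hxn : 0 < ‖x‖ := norm_pos_iff.2 hx0
      set q := (r / ‖x‖) • x with hq'
      have hqn : ‖q‖ = r := by
        rw [hq', norm_smul, Real.norm_eq_abs, abs_of_pos (div_pos hrpos hxn),
          div_mul_cancel₀ _ hxn.ne']
      have hqW : q ∈ W := by
        have h1 : q ∈ frontier W := by
          rw [hfr_eq]; exact mem_sphere_zero_iff_norm.2 hqn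
        have h2 := frontier_subset_closure h1
        rwa [hWcomp.isClosed.closure_eq] at h2
      have hx_eq : x = (‖x‖ / r) • q := by
        rw [hq', smul_smul, div_mul_div_comm, mul_comm,
          div_self (by positivity : r * ‖x‖ ≠ 0), one_smul]
      rw [hx_eq]
      exact hWconv.smul_mem_of_zero_mem (interior_subset hWint) hqW
        ⟨div_nonneg hxn.le hrpos.le, div_le_one_of_le₀ hx hrpos.le⟩
  -- conclude : V is the ball of radius r
  have hsfrV : sphere (0:EuclideanSpace ℝ (Fin n)) r ⊆ frontier V := by
    rw [← hfr_eq]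
    exact hfrS.trans hSfr
  refine ⟨r, Subset.antisymm ?_ ?_⟩
  · intro x hxV
    rw [mem_closedBall_zero_iff]
    by_contra hgt
    push_neg at hgt
    have hxn : 0 < ‖x‖ := lt_trans hrpos hgt
    set y := (r / ‖x‖) • x with hy'
    have hyn : ‖y‖ = r := by
      rw [hy', norm_smul, Real.norm_eq_abs, abs_of_pos (div_pos hrpos hxn),
        div_mul_cancel₀ _ hxn.ne']
    have hyfr : y ∈ frontier V := hsfrV (mem_sphere_zero_iff_norm.2 hyn)
    have hyint : y ∈ interior V := by
      have hmem : y ∈ openSegment ℝ (0:EuclideanSpace ℝ (Fin n)) x := by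
        rw [openSegment_eq_image]
        refine ⟨r / ‖x‖, ⟨div_pos hrpos hxn, (div_lt_one hxn).2 hgt⟩, ?_⟩
        simp [hy']
      exact hVconv.openSegment_interior_self_subset_interior hVint hxV hmem
    exact hyfr.2 hyint
  · rw [← hWball]
    exact hWV

end AuxLemmas

/-- Lemma 3.7: for a symmetric compact convex body `V` which is not a Euclidean ball,
with stabilizer `H ≤ O(n)`, and a finite set `L ⊆ ∂V` whose convex hull has `0` in its
interior, the body `W = conv (H⬝L)` is a symmetric compact convex body which is not
strictly convex. -/
theorem conv_orbit_not_strictly_convex (n : ℕ)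
    (V : Set (EuclideanSpace ℝ (Fin n)))
    (hVc : IsCompact V) (hVconv : Convex ℝ V)
    (hVint : (0 : EuclideanSpace ℝ (Fin n)) ∈ interior V)
    (hVsymm : -V = V)
    (hVnotball : ¬ ∃ r : ℝ, V = Metric.closedBall (0 : EuclideanSpace ℝ (Fin n)) r)
    (H : Subgroup (EuclideanSpace ℝ (Fin n) ≃ₗᵢ[ℝ] EuclideanSpace ℝ (Fin n)))
    (hH : ∀ g, g ∈ H ↔ (fun x => g x) '' V = V)
    (L : Set (EuclideanSpace ℝ (Fin n))) (hLfin : L.Finite) (hLbd : L ⊆ frontier V)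
    (hL0 : (0 : EuclideanSpace ℝ (Fin n)) ∈ interior (convexHull ℝ L))
    (W : Set (EuclideanSpace ℝ (Fin n)))
    (hW : W = convexHull ℝ {y | ∃ g ∈ H, ∃ x ∈ L, y = g x}) :
    IsCompact W ∧ Convex ℝ W ∧ -W = W ∧ (interior W).Nonempty ∧
      ∃ x ∈ frontier W, x ∉ Set.extremePoints ℝ W := by
  classical
  set S : Set (EuclideanSpace ℝ (Fin n)) := {y | ∃ g ∈ H, ∃ x ∈ L, y = g x} with hS
  have hVcl : IsClosed V := hVc.isClosed
  have h0V : (0 : EuclideanSpace ℝ (Fin n)) ∈ V := interior_subset hVint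
  -- each g ∈ H preserves the frontier
  have hgfr : ∀ g ∈ H, ∀ x ∈ frontier V, g x ∈ frontier V := by
    intro g hg x hx
    have himg : (fun x => g x) '' V = V := (hH g).1 hg
    have h2 : (fun x => g x) '' frontier V = frontier V := by
      conv_rhs => rw [← himg]
      simpa using g.toHomeomorph.image_frontier V
    rw [← h2]
    exact mem_image_of_mem _ hx
  have hSfr : S ⊆ frontier V := by
    rintro y ⟨g, hg, x, hx, rfl⟩
    exact hgfr g hg x (hLbd hx)
  have hSV : S ⊆ V := hSfr.trans (fun x hx => by have := frontier_subset_closure hx; rwa [hVcl.closure_eq] at this)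
  have hLS : L ⊆ S := fun x hx => ⟨1, H.one_mem, x, hx, rfl⟩
  -- the compact set of contenders
  set T : Set (EuclideanSpace ℝ (Fin n) →L[ℝ] EuclideanSpace ℝ (Fin n)) :=
    {f | (∀ v, ‖f v‖ = ‖v‖) ∧ (∀ v ∈ V, f v ∈ V) ∧
      (∀ v ∈ V, ContinuousLinearMap.adjoint f v ∈ V)} with hT
  have hev : ∀ v : EuclideanSpace ℝ (Fin n),
      Continuous fun f : EuclideanSpace ℝ (Fin n) →L[ℝ] EuclideanSpace ℝ (Fin n) => f v :=
    fun v => (ContinuousLinearMap.apply ℝ (EuclideanSpace ℝ (Fin n)) v).continuous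
  have hTclosed : IsClosed T := by
    have e1 : T = (⋂ v, {f : EuclideanSpace ℝ (Fin n) →L[ℝ] EuclideanSpace ℝ (Fin n) |
        ‖f v‖ = ‖v‖}) ∩ ((⋂ v ∈ V, {f | f v ∈ V}) ∩
        (⋂ v ∈ V, {f | ContinuousLinearMap.adjoint f v ∈ V})) := by
      ext f
      simp only [hT, Set.mem_setOf_eq, Set.mem_inter_iff, Set.mem_iInter]
    rw [e1]
    refine IsClosed.inter (isClosed_iInter fun v => ?_)
      (IsClosed.inter (isClosed_iInter fun v => isClosed_iInter fun _ => ?_)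
        (isClosed_iInter fun v => isClosed_iInter fun _ => ?_))
    · exact isClosed_eq (continuous_norm.comp (hev v)) continuous_const
    · exact hVcl.preimage (hev v)
    · exact hVcl.preimage ((hev v).comp
        (ContinuousLinearMap.adjoint (𝕜 := ℝ) (E := EuclideanSpace ℝ (Fin n))
          (F := EuclideanSpace ℝ (Fin n))).continuous)
  have hTcomp : IsCompact T := by
    refine (isCompact_closedBall (0 : EuclideanSpace ℝ (Fin n) →L[ℝ] EuclideanSpace ℝ (Fin n))
      1).of_isClosed_subset hTclosed ?_
    intro f hf
    rw [mem_closedBall_zero_iff]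
    exact ContinuousLinearMap.opNorm_le_bound _ zero_le_one fun v => by rw [hf.1 v, one_mul]
  -- every element of T comes from H
  have hfT : ∀ f ∈ T, ∃ g ∈ H, ∀ v, f v = g v := by
    intro f hf
    obtain ⟨h1, h2, h3⟩ := hf
    set li : EuclideanSpace ℝ (Fin n) →ₗᵢ[ℝ] EuclideanSpace ℝ (Fin n) :=
      ⟨(f : EuclideanSpace ℝ (Fin n) →ₗ[ℝ] EuclideanSpace ℝ (Fin n)), h1⟩ with hli
    set g := li.toLinearIsometryEquiv rfl with hg
    have hgv : ∀ v, g v = f v := fun v => by rw [hg]; rfl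
    have hfstar : ∀ v, ContinuousLinearMap.adjoint f v = g.symm v := by
      intro v
      apply ext_inner_right ℝ
      intro u
      rw [ContinuousLinearMap.adjoint_inner_left]
      have e2 : ⟪g.symm v, u⟫ = ⟪g (g.symm v), g u⟫ := (g.inner_map_map _ _).symm
      rw [e2, g.apply_symm_apply, hgv]
    have hgH : g ∈ H := by
      rw [hH]
      apply Subset.antisymm
      · rintro y ⟨v, hv, rfl⟩
        have := h2 v hv
        rwa [← hgv] at this
      · intro v hv
        refine ⟨g.symm v, ?_, g.apply_symm_apply v⟩
        rw [← hfstar v]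
        exact h3 v hv
    exact ⟨g, hgH, fun v => (hgv v).symm⟩
  -- every element of H gives an element of T
  have hHf : ∀ g ∈ H, ∃ f ∈ T, ∀ v, f v = g v := by
    intro g hg
    refine ⟨g.toLinearIsometry.toContinuousLinearMap, ⟨fun v => g.norm_map v, ?_, ?_⟩, fun v => rfl⟩
    · intro v hv
      have himg : (fun x => g x) '' V = V := (hH g).1 hg
      rw [← himg]
      exact mem_image_of_mem _ hv
    · intro v hv
      have hadj : ContinuousLinearMap.adjoint g.toLinearIsometry.toContinuousLinearMap v
          = g.symm v := by
        apply ext_inner_right ℝ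
        intro u
        rw [ContinuousLinearMap.adjoint_inner_left]
        have e2 : ⟪g.symm v, u⟫ = ⟪g (g.symm v), g u⟫ := (g.inner_map_map _ _).symm
        rw [e2, g.apply_symm_apply]
        rfl
      rw [hadj]
      have hginv : g⁻¹ ∈ H := H.inv_mem hg
      have himg : (fun x => g⁻¹ x) '' V = V := (hH g⁻¹).1 hginv
      rw [← himg]
      exact mem_image_of_mem _ hv
  -- S as finite union of compact images
  have hSeq : S = ⋃ x ∈ L, (fun f : EuclideanSpace ℝ (Fin n) →L[ℝ] EuclideanSpace ℝ (Fin n)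
      => f x) '' T := by
    ext y
    simp only [hS, Set.mem_setOf_eq, Set.mem_iUnion, Set.mem_image]
    constructor
    · rintro ⟨g, hg, x, hx, rfl⟩
      obtain ⟨f, hfT', hfv⟩ := hHf g hg
      exact ⟨x, hx, f, hfT', hfv x⟩
    · rintro ⟨x, hx, f, hfT', rfl⟩
      obtain ⟨g, hgH, hgv⟩ := hfT f hfT'
      exact ⟨g, hgH, x, hx, hgv x⟩
  have hScomp : IsCompact S := by
    rw [hSeq]
    exact hLfin.isCompact_biUnion fun x _ => hTcomp.image (hev x)
  -- basic properties of W
  have hWcomp : IsCompact W := by rw [hW]; exact aux_isCompact_convexHull hScomp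
  have hWconv : Convex ℝ W := by rw [hW]; exact convex_convexHull ℝ _
  have hnuH : (LinearIsometryEquiv.neg ℝ :
      EuclideanSpace ℝ (Fin n) ≃ₗᵢ[ℝ] EuclideanSpace ℝ (Fin n)) ∈ H := by
    rw [hH]
    show (fun x : EuclideanSpace ℝ (Fin n) => -x) '' V = V
    have himneg : (fun x : EuclideanSpace ℝ (Fin n) => -x) '' V = -V := by
      simp [Set.image_neg_eq_neg]
    rw [himneg, hVsymm]
  have hSneg : ∀ y ∈ S, -y ∈ S := by
    rintro y ⟨g, hg, x, hx, rfl⟩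
    exact ⟨LinearIsometryEquiv.neg ℝ * g, H.mul_mem hnuH hg, x, hx, rfl⟩
  have hSnegeq : -S = S := by
    ext y
    rw [Set.mem_neg]
    constructor
    · intro h
      have h2 := hSneg _ h
      rwa [neg_neg] at h2
    · intro h
      exact hSneg y h
  have hWneg : -W = W := by
    rw [hW, ← convexHull_neg, hSnegeq]
  have hWsub : convexHull ℝ L ⊆ W := by rw [hW]; exact convexHull_mono hLS
  have hWint : (0 : EuclideanSpace ℝ (Fin n)) ∈ interior W := interior_mono hWsub hL0
  refine ⟨hWcomp, hWconv, hWneg, ⟨0, hWint⟩, ?_⟩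
  -- non-strict convexity
  by_contra hcon
  push_neg at hcon
  rcases Nat.lt_or_ge n 2 with hn | hn
  · exact hVnotball (aux_small_dim n hn V hVc hVconv hVint hVsymm)
  · apply hVnotball
    refine aux_endgame n hn V hVconv hVint S hSfr ((fun x => ‖x‖) '' L) (hLfin.image _)
      ?_ W hWcomp hWconv hWint ?_ ?_
      (fun A hA hfin => aux_preconnected_finite_subsingleton hA hfin)
    · rintro y ⟨g, hg, x, hx, rfl⟩
      exact ⟨x, hx, (g.norm_map x).symm⟩
    · rw [hW]
      exact convexHull_min hSV hVconv
    · intro x hx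
      have h2 := hcon x hx
      rw [hW] at h2
      exact extremePoints_convexHull_subset h2
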